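/- Let Σ be a unary signature and let E and F be GTESs over Σ, with W = ST(E ∪ F). Then ↔*_{E∪F} ⊆ ↔*_E ∪ ↔*_F if and only if for every p ∈ W, the ↔*_{E∪F}-class of p equals the ↔*_E-class of p or the ↔*_{E∪F}-class of p equals the ↔*_F-class of p. -/

import Mathlib

inductive GTerm (S : Type) (ar : S → ℕ) : Type
  | node (σ : S) (args : Fin (ar σ) → GTerm S ar) : GTerm S ar

/-- The congruence on the ground term algebra generated by a set of equations `E`:
the smallest equivalence relation containing `E` and compatible with all operations. -/
inductive EqCong {S : Type} {ar : S → ℕ} (E : Set (GTerm S ar × GTerm S ar)) :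
    GTerm S ar → GTerm S ar → Prop
  | base {s t : GTerm S ar} : (s, t) ∈ E → EqCong E s t
  | refl (t : GTerm S ar) : EqCong E t t
  | symm {s t : GTerm S ar} : EqCong E s t → EqCong E t s
  | trans {s t u : GTerm S ar} : EqCong E s t → EqCong E t u → EqCong E s u
  | lift {σ : S} {f g : Fin (ar σ) → GTerm S ar} :
      (∀ i, EqCong E (f i) (g i)) → EqCong E (GTerm.node σ f) (GTerm.node σ g)

/-- A congruence on the ground term algebra: an equivalence relation compatible
with all operations. -/
def IsTermCongruence {S : Type} {ar : S → ℕ} (r : GTerm S ar → GTerm S ar → Prop) : Prop :=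
  Equivalence r ∧
    ∀ (σ : S) (f g : Fin (ar σ) → GTerm S ar),
      (∀ i, r (f i) (g i)) → r (GTerm.node σ f) (GTerm.node σ g)

/-- `Subterm s t` : `s` is a subterm of `t`. -/
inductive Subterm {S : Type} {ar : S → ℕ} : GTerm S ar → GTerm S ar → Prop
  | refl (t : GTerm S ar) : Subterm t t
  | node {s : GTerm S ar} {σ : S} {f : Fin (ar σ) → GTerm S ar} (i : Fin (ar σ)) :
      Subterm s (f i) → Subterm s (GTerm.node σ f)

/-- `ST E` : the set of all subterms of sides of equations of `E`. -/
def STSet {S : Type} {ar : S → ℕ} (E : Set (GTerm S ar × GTerm S ar)) : Set (GTerm S ar) :=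
  {t | ∃ p ∈ E, Subterm t p.1 ∨ Subterm t p.2}

/-- The `Θ⟨G⟩`-class of `t` inside `W`. -/
def thCls {S : Type} {ar : S → ℕ} (G : Set (GTerm S ar × GTerm S ar))
    (W : Set (GTerm S ar)) (t : GTerm S ar) : Set (GTerm S ar) :=
  {u | u ∈ W ∧ EqCong G t u}

/-- `Θ⟨G⟩` as a set of pairs: the restriction of the generated congruence to `W × W`. -/
def Theta {S : Type} {ar : S → ℕ} (G : Set (GTerm S ar × GTerm S ar))
    (W : Set (GTerm S ar)) : Set (GTerm S ar × GTerm S ar) :=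
  {p | p.1 ∈ W ∧ p.2 ∈ W ∧ EqCong G p.1 p.2}

/-- `C⟨G⟩` : the set of `Θ⟨G⟩`-classes of elements of `W`, viewed as new constants. -/
def CCl {S : Type} {ar : S → ℕ} (G : Set (GTerm S ar × GTerm S ar))
    (W : Set (GTerm S ar)) : Set (Set (GTerm S ar)) :=
  {A | ∃ t ∈ W, A = thCls G W t}

/-- Terms over the signature extended with a type `C` of new constants. -/
inductive XTerm (S : Type) (ar : S → ℕ) (C : Type) : Type
  | const (c : C) : XTerm S ar C
  | node (σ : S) (args : Fin (ar σ) → XTerm S ar C) : XTerm S ar C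

abbrev XRule (S : Type) (ar : S → ℕ) (C : Type) : Type :=
  XTerm S ar C × XTerm S ar C

/-- Embedding of ground terms over `Σ` into the extended terms. -/
def GTerm.toX {S : Type} {ar : S → ℕ} {C : Type} : GTerm S ar → XTerm S ar C
  | .node σ f => .node σ (fun i => (f i).toX)

/-- The GTRS `R⟨G⟩` (relative to the subterm set `W`): its rules are exactly
`σ(t₁/Θ⟨G⟩, …, t_m/Θ⟨G⟩) → σ(t₁,…,t_m)/Θ⟨G⟩` for `σ(t₁,…,t_m) ∈ W`. -/
def RRsys {S : Type} {ar : S → ℕ} (G : Set (GTerm S ar × GTerm S ar))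
    (W : Set (GTerm S ar)) : Set (XRule S ar (Set (GTerm S ar))) :=
  {r | ∃ (σ : S) (ts : Fin (ar σ) → GTerm S ar),
      GTerm.node σ ts ∈ W ∧
      r = (XTerm.node σ (fun i => XTerm.const (thCls G W (ts i))),
           XTerm.const (thCls G W (GTerm.node σ ts)))}

/-- One-step rewriting by a GTRS `R`. -/
inductive Rew {S : Type} {ar : S → ℕ} {C : Type} (R : Set (XRule S ar C)) :
    XTerm S ar C → XTerm S ar C → Prop
  | rule {l r : XTerm S ar C} : (l, r) ∈ R → Rew R l r
  | node {σ : S} {f g : Fin (ar σ) → XTerm S ar C} (i : Fin (ar σ)) :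
      Rew R (f i) (g i) → (∀ j, j ≠ i → f j = g j) →
      Rew R (XTerm.node σ f) (XTerm.node σ g)

/-- `→*_R` : reflexive–transitive closure of one-step rewriting. -/
def RewStar {S : Type} {ar : S → ℕ} {C : Type} (R : Set (XRule S ar C)) :
    XTerm S ar C → XTerm S ar C → Prop :=
  Relation.ReflTransGen (Rew R)

/-- A GTRS is total (w.r.t. a set `Cst` of constants) if every `σ(a₁,…,a_m)` with
`a₁,…,a_m ∈ Cst` is the left-hand side of some rule. -/
def TotalR {S : Type} {ar : S → ℕ} (R : Set (XRule S ar (Set (GTerm S ar))))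
    (Cst : Set (Set (GTerm S ar))) : Prop :=
  ∀ (σ : S) (av : Fin (ar σ) → Set (GTerm S ar)), (∀ i, av i ∈ Cst) →
    ∃ rhs, (XTerm.node σ (fun i => XTerm.const (av i)), rhs) ∈ R

/-- An extended term containing no new constants, i.e. a ground term over `Σ`. -/
def IsGroundX {S : Type} {ar : S → ℕ} {C : Type} (t : XTerm S ar C) : Prop :=
  ∃ s : GTerm S ar, GTerm.toX s = t

/-- `ProperExt b t` : `t = δ[b]` for some one-hole context `δ` over `Σ`
different from the hole itself. -/
inductive ProperExt {S : Type} {ar : S → ℕ} {C : Type} (b : XTerm S ar C) :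
    XTerm S ar C → Prop
  | base {σ : S} {f : Fin (ar σ) → XTerm S ar C} (i : Fin (ar σ)) :
      f i = b → (∀ j, j ≠ i → IsGroundX (f j)) → ProperExt b (XTerm.node σ f)
  | step {σ : S} {f : Fin (ar σ) → XTerm S ar C} (i : Fin (ar σ)) :
      ProperExt b (f i) → (∀ j, j ≠ i → IsGroundX (f j)) → ProperExt b (XTerm.node σ f)

/-- `R` reaches the constant `a` from a proper extension of the constant `b`. -/
def ReachesPE {S : Type} {ar : S → ℕ} (R : Set (XRule S ar (Set (GTerm S ar))))
    (a b : Set (GTerm S ar)) : Prop :=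
  ∃ t, ProperExt (XTerm.const b) t ∧ RewStar R t (XTerm.const a)

/-- The arc relation `A[E;F]` of the auxiliary directed graph: `(a,b)` is an arc iff some
rule `σ(a₁,…,a_m) → a` of `R` has `b = aᵢ` for some `i`. -/
def AuxArc {S : Type} {ar : S → ℕ} (R : Set (XRule S ar (Set (GTerm S ar))))
    (a b : Set (GTerm S ar)) : Prop :=
  ∃ (σ : S) (av : Fin (ar σ) → Set (GTerm S ar)) (i : Fin (ar σ)),
    (XTerm.node σ (fun j => XTerm.const (av j)), XTerm.const a) ∈ R ∧ av i = b

/-- `R1` keeps up with `Rall` writing the constant `a`. -/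
def KeepsUp {S : Type} {ar : S → ℕ}
    (R1 Rall : Set (XRule S ar (Set (GTerm S ar))))
    (C1 : Set (Set (GTerm S ar))) (a : Set (GTerm S ar)) : Prop :=
  ∀ (σ : S) (av : Fin (ar σ) → Set (GTerm S ar)),
    (XTerm.node σ (fun i => XTerm.const (av i)), XTerm.const a) ∈ Rall →
    ∀ bv : Fin (ar σ) → Set (GTerm S ar),
      (∀ i, bv i ∈ C1) → (∀ i, bv i ⊆ av i) →
      ∃ rhs, (XTerm.node σ (fun i => XTerm.const (bv i)), rhs) ∈ R1

/-- `R1` (with constant set `C1`) simulates `Rall` (with constant set `Call`) on `a`. -/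
def SimulatesOn {S : Type} {ar : S → ℕ}
    (R1 Rall : Set (XRule S ar (Set (GTerm S ar))))
    (C1 Call : Set (Set (GTerm S ar))) (a : Set (GTerm S ar)) : Prop :=
  a ∈ C1 ∧ ∀ b ∈ Call, ReachesPE Rall a b → KeepsUp R1 Rall C1 b

/-- `R⟨E,F⟩` and `R⟨F,E⟩` together simulate `R⟨E∪F,∅⟩`. -/
def TogetherSim {S : Type} {ar : S → ℕ}
    (E F : Set (GTerm S ar × GTerm S ar)) : Prop :=
  ∀ a ∈ CCl (E ∪ F) (STSet (E ∪ F)),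
    SimulatesOn (RRsys E (STSet (E ∪ F))) (RRsys (E ∪ F) (STSet (E ∪ F)))
      (CCl E (STSet (E ∪ F))) (CCl (E ∪ F) (STSet (E ∪ F))) a ∨
    SimulatesOn (RRsys F (STSet (E ∪ F))) (RRsys (E ∪ F) (STSet (E ∪ F)))
      (CCl F (STSet (E ∪ F))) (CCl (E ∪ F) (STSet (E ∪ F))) a

namespace Stmt3Aux

variable {S : Type} {ar : S → ℕ}

/-- Apply a list of (unary) symbols as a context. -/
def app (w : List S) (t : GTerm S ar) : GTerm S ar :=
  w.foldr (fun σ u => GTerm.node σ (fun _ => u)) t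

lemma app_cons (σ : S) (w : List S) (t : GTerm S ar) :
    app (σ :: w) t = GTerm.node σ (fun _ => app w t) := rfl

lemma app_append (w v : List S) (t : GTerm S ar) :
    app (w ++ v) t = app w (app v t) := by
  induction w with
  | nil => rfl
  | cons σ w ih => simp [app_cons, ih]

lemma mono {E F : Set (GTerm S ar × GTerm S ar)} (hEF : E ⊆ F) {s t : GTerm S ar}
    (h : EqCong E s t) : EqCong F s t := by
  induction h with
  | base h => exact .base (hEF h)
  | refl t => exact .refl t
  | symm _ ih => exact .symm ih
  | trans _ _ ih1 ih2 => exact .trans ih1 ih2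
  | lift _ ih => exact .lift ih

lemma lift_app {E : Set (GTerm S ar × GTerm S ar)} (w : List S) {p q : GTerm S ar}
    (h : EqCong E p q) : EqCong E (app w p) (app w q) := by
  induction w with
  | nil => exact h
  | cons σ w ih => exact .lift (fun _ => ih)

lemma prefix_cases {w1 : List S} (h1 : ∀ σ ∈ w1, ar σ = 1) :
    ∀ {w2 : List S} {a b : GTerm S ar}, app w1 a = app w2 b →
    (∃ v, w2 = w1 ++ v ∧ a = app v b) ∨ (∃ v, w1 = w2 ++ v ∧ b = app v a) := by
  induction w1 with
  | nil => intro w2 a b h; exact Or.inl ⟨w2, rfl, h⟩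
  | cons σ w1 ih =>
    intro w2 a b h
    cases w2 with
    | nil => exact Or.inr ⟨σ :: w1, rfl, h.symm⟩
    | cons τ w2 =>
      rw [app_cons, app_cons] at h
      injection h with hστ hfg
      subst hστ
      have hfg' := congrFun (eq_of_heq hfg) ⟨0, by
        have := h1 σ List.mem_cons_self; omega⟩
      rcases ih (fun τ hτ => h1 τ (List.mem_cons_of_mem _ hτ)) hfg' with
        ⟨v, hv, ha⟩ | ⟨v, hv, hb⟩
      · exact Or.inl ⟨v, by rw [hv]; rfl, ha⟩
      · exact Or.inr ⟨v, by rw [hv]; rfl, hb⟩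

/-- The sides of equations of `G`. -/
def sides (G : Set (GTerm S ar × GTerm S ar)) : Set (GTerm S ar) :=
  {x | ∃ p ∈ G, x = p.1 ∨ x = p.2}

/-- Main structural lemma for unary signatures. -/
lemma main (hunary : ∀ σ : S, ar σ ≤ 1) {G : Set (GTerm S ar × GTerm S ar)}
    {s t : GTerm S ar} (h : EqCong G s t) :
    s = t ∨ ∃ (w : List S) (p q m : GTerm S ar),
      (∀ σ ∈ w, ar σ = 1) ∧ s = app w p ∧ t = app w q ∧
      EqCong G p m ∧ EqCong G m q ∧ m ∈ sides G := by
  induction h with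
  | @base s t h =>
    exact Or.inr ⟨[], s, t, s, by simp, rfl, rfl, .refl s, .base h,
      ⟨(s, t), h, Or.inl rfl⟩⟩
  | refl => exact Or.inl rfl
  | symm h ih =>
    rcases ih with rfl | ⟨w, p, q, m, hw, hs, ht, hpm, hmq, hm⟩
    · exact Or.inl rfl
    · exact Or.inr ⟨w, q, p, m, hw, ht, hs, hmq.symm, hpm.symm, hm⟩
  | trans h1 h2 ih1 ih2 =>
    rcases ih1 with rfl | ⟨w1, p1, q1, m1, hw1, hs1, ht1, hp1, hq1, hm1⟩
    · exact ih2
    rcases ih2 with rfl | ⟨w2, p2, q2, m2, hw2, hs2, ht2, hp2, hq2, hm2⟩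
    · exact Or.inr ⟨w1, p1, q1, m1, hw1, hs1, ht1, hp1, hq1, hm1⟩
    rcases prefix_cases hw1 (ht1.symm.trans hs2) with ⟨v, hv, ha⟩ | ⟨v, hv, hb⟩
    · refine Or.inr ⟨w1, p1, app v q2, m1, hw1, hs1, ?_, hp1, ?_, hm1⟩
      · rw [ht2, hv, app_append]
      · have hq : EqCong G q1 (app v q2) := by
          rw [ha]; exact lift_app v (hp2.trans hq2)
        exact hq1.trans hq
    · refine Or.inr ⟨w2, app v p1, q2, m2, hw2, ?_, ht2, ?_, hq2, hm2⟩
      · rw [hs1, hv, app_append]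
      · have hq : EqCong G (app v p1) p2 := by
          rw [hb]; exact lift_app v (hp1.trans hq1)
        exact hq.trans hp2
  | @lift σ f g hfg ih =>
    rcases Nat.le_one_iff_eq_zero_or_eq_one.mp (hunary σ) with h0 | h1
    · left
      exact congrArg _ (funext fun i => absurd i.isLt (by omega))
    · have i0 : Fin (ar σ) := ⟨0, by omega⟩
      have hfi : ∀ i : Fin (ar σ), i = i0 := fun i => Fin.ext (by
        have := i.isLt; omega)
      rcases ih i0 with heq | ⟨w, p, q, m, hw, hs, ht, hpm, hmq, hm⟩
      · left
        exact congrArg _ (funext fun i => by rw [hfi i, heq])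
      · refine Or.inr ⟨σ :: w, p, q, m, ?_, ?_, ?_, hpm, hmq, hm⟩
        · intro τ hτ
          rcases List.mem_cons.mp hτ with rfl | hτ
          · exact h1
          · exact hw τ hτ
        · rw [app_cons]
          exact congrArg _ (funext fun i => by rw [hfi i, hs])
        · rw [app_cons]
          exact congrArg _ (funext fun i => by rw [hfi i, ht])

lemma sides_subset_ST {G : Set (GTerm S ar × GTerm S ar)} :
    sides G ⊆ STSet G := by
  rintro x ⟨p, hp, h | h⟩ <;> subst h
  · exact ⟨p, hp, Or.inl (.refl _)⟩
  · exact ⟨p, hp, Or.inr (.refl _)⟩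

end Stmt3Aux

theorem stmt_3 {S : Type} [Fintype S] {ar : S → ℕ} (hconst : ∃ c : S, ar c = 0)
    (hunary : ∀ σ : S, ar σ ≤ 1)
    (E F : Set (GTerm S ar × GTerm S ar)) (hEfin : E.Finite) (hFfin : F.Finite) :
    (∀ s t : GTerm S ar, EqCong (E ∪ F) s t → (EqCong E s t ∨ EqCong F s t)) ↔
    (∀ p ∈ STSet (E ∪ F),
      {s | EqCong (E ∪ F) p s} = {s | EqCong E p s} ∨
      {s | EqCong (E ∪ F) p s} = {s | EqCong F p s}) := by
  open Stmt3Aux in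
  constructor
  · intro Hincl p _
    by_contra hcon
    push_neg at hcon
    obtain ⟨hne, hnf⟩ := hcon
    have mE : {s | EqCong E p s} ⊆ {s | EqCong (E ∪ F) p s} :=
      fun x hx => mono Set.subset_union_left hx
    have mF : {s | EqCong F p s} ⊆ {s | EqCong (E ∪ F) p s} :=
      fun x hx => mono Set.subset_union_right hx
    obtain ⟨s, hsin, hsout⟩ := Set.not_subset.mp
      (fun hsub => hne (Set.Subset.antisymm hsub mE))
    obtain ⟨t, htin, htout⟩ := Set.not_subset.mp
      (fun hsub => hnf (Set.Subset.antisymm hsub mF))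
    have hFps : EqCong F p s := (Hincl p s hsin).resolve_left hsout
    have hEpt : EqCong E p t := (Hincl p t htin).resolve_right htout
    have hst : EqCong (E ∪ F) s t := EqCong.trans (EqCong.symm hsin) htin
    rcases Hincl s t hst with h | h
    · exact hsout (hEpt.trans h.symm)
    · exact htout (hFps.trans h)
  · intro Hcls s t h
    rcases main hunary h with rfl | ⟨w, p, q, m, hw, hs, ht, hpm, hmq, hm⟩
    · exact Or.inl (.refl s)
    subst hs ht
    rcases Hcls m (sides_subset_ST hm) with hE | hF
    · have h1 : p ∈ {x | EqCong E m x} := hE ▸ (show p ∈ {x | EqCong (E ∪ F) m x} from hpm.symm)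
      have h2 : q ∈ {x | EqCong E m x} := hE ▸ (show q ∈ {x | EqCong (E ∪ F) m x} from hmq)
      exact Or.inl (lift_app w (EqCong.trans (EqCong.symm h1) h2))
    · have h1 : p ∈ {x | EqCong F m x} := hF ▸ (show p ∈ {x | EqCong (E ∪ F) m x} from hpm.symm)
      have h2 : q ∈ {x | EqCong F m x} := hF ▸ (show q ∈ {x | EqCong (E ∪ F) m x} from hmq)
      exact Or.inr (lift_app w (EqCong.trans (EqCong.symm h1) h2))
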